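/- Under the stated assumptions, the two-query gradient estimator satisfies the bias bound ‖E[ĝ(θ,c)] − ∇L(θ)‖ ≤ c²·D₁·D₂/6 for every θ ∈ ℝ^d and every c > 0, provided E[‖Δ‖³·‖φ(Δ)‖] ≤ D₂. (Bias part of Lemma 1: the bias of the simultaneous-perturbation gradient estimator is O(c²) with explicit constant.) -/

import Mathlib

open MeasureTheory Filter Topology

open RealInnerProductSpace

section Helpers

lemma poly_bound {g g' : ℝ → ℝ} (hg : ∀ t, HasDerivAt g (g' t) t) (h0 : g 0 = 0)
    {K : ℝ} (n : ℕ) (hb : ∀ t ∈ Set.Icc (0:ℝ) 1, |g' t| ≤ K * t ^ n) :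
    ∀ t ∈ Set.Icc (0:ℝ) 1, |g t| ≤ K * t ^ (n+1) / (n+1) := by
  have hB : ∀ t : ℝ, HasDerivAt (fun t => K * t ^ (n+1) / (n+1)) (K * t ^ n) t := by
    intro t
    have h := ((hasDerivAt_pow (n+1) t).const_mul K).div_const ((n:ℝ)+1)
    convert h using 1
    · rfl
    · rfl
    rw [Nat.add_sub_cancel]
    push_cast
    field_simp
  have := image_norm_le_of_norm_deriv_right_le_deriv_boundary
    (f := g) (f' := g') (a := 0) (b := 1)
    (fun t _ => (hg t).continuousAt.continuousWithinAt)
    (fun t _ => (hg t).hasDerivWithinAt)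
    (B := fun t => K * t ^ (n+1) / (n+1)) (B' := fun t => K * t ^ n)
    (by simp [h0]) hB
    (fun t ht => hb t ⟨ht.1, le_of_lt ht.2⟩)
  intro t ht
  simpa using this ht

variable {E : Type*} [NormedAddCommGroup E] [NormedSpace ℝ E]

omit [NormedAddCommGroup E] [NormedSpace ℝ E] in
lemma cons_const (k : ℕ) (v : E) :
    (Fin.cons v (fun _ : Fin k => v) : Fin (k+1) → E) = fun _ => v := by
  funext i
  refine Fin.cases ?_ ?_ i <;> simp

lemma taylor_sym {L : E → ℝ} (hL : ContDiff ℝ 3 L) {D₁ : ℝ}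
    (hbd : ∀ x, ‖iteratedFDeriv ℝ 3 L x‖ ≤ D₁) (θ v : E) :
    |L (θ + v) - L (θ - v) - 2 * (fderiv ℝ L θ v)| ≤ D₁ * ‖v‖ ^ 3 / 3 := by
  have hp : HasFTaylorSeriesUpTo 3 L (ftaylorSeries ℝ L) :=
    contDiff_iff_ftaylorSeries.mp (by exact_mod_cast hL)
  set a : ℕ → ℝ → ℝ := fun k t => iteratedFDeriv ℝ k L (θ + t • v) (fun _ => v) with ha
  set b : ℕ → ℝ → ℝ := fun k t => iteratedFDeriv ℝ k L (θ - t • v) (fun _ => v) with hb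
  have hda : ∀ k : ℕ, k < 3 → ∀ s : ℝ, HasDerivAt (a k) (a (k+1) s) s := by
    intro k hk s
    have line : HasDerivAt (fun t : ℝ => θ + t • v) v s := by
      simpa using ((hasDerivAt_id s).smul_const v).const_add θ
    have hF : HasFDerivAt (fun y => ftaylorSeries ℝ L y k)
        ((ftaylorSeries ℝ L (θ + s • v) (k+1)).curryLeft) (θ + s • v) :=
      hp.fderiv k (by exact_mod_cast hk) _
    have comp := hF.comp_hasDerivAt s line
    have := ((ContinuousMultilinearMap.apply ℝ (fun _ : Fin k => E) ℝ
        (fun _ => v)).hasFDerivAt).comp_hasDerivAt s comp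
    simpa [ha, ftaylorSeries, ContinuousMultilinearMap.apply_apply,
      ContinuousMultilinearMap.curryLeft_apply, cons_const, Function.comp_def] using this
  have hdb : ∀ k : ℕ, k < 3 → ∀ s : ℝ, HasDerivAt (b k) (-(b (k+1) s)) s := by
    intro k hk s
    have line : HasDerivAt (fun t : ℝ => θ - t • v) (-v) s := by
      simpa [sub_eq_add_neg] using (((hasDerivAt_id s).smul_const v).neg).const_add θ
    have hF : HasFDerivAt (fun y => ftaylorSeries ℝ L y k)
        ((ftaylorSeries ℝ L (θ - s • v) (k+1)).curryLeft) (θ - s • v) :=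
      hp.fderiv k (by exact_mod_cast hk) _
    have comp := hF.comp_hasDerivAt s line
    have h3 := ((ContinuousMultilinearMap.apply ℝ (fun _ : Fin k => E) ℝ
        (fun _ => v)).hasFDerivAt).comp_hasDerivAt s comp
    have hneg : (ftaylorSeries ℝ L (θ - s • v) (k+1)) (Fin.cons (-v) (fun _ => v))
        = -(ftaylorSeries ℝ L (θ - s • v) (k+1)) (fun _ => v) := by
      have := ((ftaylorSeries ℝ L (θ - s • v) (k+1)).toMultilinearMap).cons_smul
        (fun _ => v) (-1 : ℝ) v
      simpa [cons_const] using this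
    simpa [hb, ftaylorSeries, ContinuousMultilinearMap.apply_apply,
      ContinuousMultilinearMap.curryLeft_apply, hneg, cons_const, Function.comp_def] using h3
  set K : ℝ := 2 * (D₁ * ‖v‖ ^ 3) with hK
  have hb3 : ∀ k : ℕ, ∀ s : ℝ, |a k s| ≤ ‖iteratedFDeriv ℝ k L (θ + s • v)‖ * ‖v‖ ^ k ∧
      |b k s| ≤ ‖iteratedFDeriv ℝ k L (θ - s • v)‖ * ‖v‖ ^ k := by
    intro k s
    constructor
    · have := (iteratedFDeriv ℝ k L (θ + s • v)).le_opNorm (fun _ => v)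
      simpa [ha] using this
    · have := (iteratedFDeriv ℝ k L (θ - s • v)).le_opNorm (fun _ => v)
      simpa [hb] using this
  set g2 : ℝ → ℝ := fun t => a 2 t - b 2 t with hg2
  set g1 : ℝ → ℝ := fun t => a 1 t + b 1 t - 2 * (a 1 0) with hg1
  set g0 : ℝ → ℝ := fun t => a 0 t - b 0 t - 2 * (a 1 0) * t with hg0
  have hd2 : ∀ s : ℝ, HasDerivAt g2 (a 3 s + b 3 s) s := by
    intro s
    simpa [hg2, sub_neg_eq_add, Pi.sub_def] using (hda 2 (by norm_num) s).sub (hdb 2 (by norm_num) s)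
  have hd1 : ∀ s : ℝ, HasDerivAt g1 (g2 s) s := by
    intro s
    simpa [hg1, hg2, sub_neg_eq_add, Pi.sub_def, Pi.add_def, ← sub_eq_add_neg] using
      (((hda 1 (by norm_num) s).add (hdb 1 (by norm_num) s)).sub (hasDerivAt_const s (2 * a 1 0)))
  have hd0 : ∀ s : ℝ, HasDerivAt g0 (g1 s) s := by
    intro s
    have h := ((hda 0 (by norm_num) s).sub (hdb 0 (by norm_num) s)).sub
      (((hasDerivAt_id s).const_mul (2 * a 1 0)))
    simpa [hg0, hg1, sub_neg_eq_add, mul_comm, mul_assoc, Pi.sub_def] using h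
  have h2 : ∀ t ∈ Set.Icc (0:ℝ) 1, |g2 t| ≤ K * t ^ 1 := by
    have := poly_bound (g := g2) (g' := fun s => a 3 s + b 3 s) hd2
      (by simp [hg2, ha, hb]) (K := K) 0 ?_
    · intro t ht; simpa using this t ht
    · intro t ht
      have h1 := (hb3 3 t).1
      have h2' := (hb3 3 t).2
      calc |a 3 t + b 3 t| ≤ |a 3 t| + |b 3 t| := abs_add_le _ _
        _ ≤ D₁ * ‖v‖ ^ 3 + D₁ * ‖v‖ ^ 3 := by
            gcongr
            · exact h1.trans (by gcongr; exact hbd _)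
            · exact h2'.trans (by gcongr; exact hbd _)
        _ = K * t ^ 0 := by rw [hK]; ring
  have h1 : ∀ t ∈ Set.Icc (0:ℝ) 1, |g1 t| ≤ (K / 2) * t ^ 2 := by
    have := poly_bound (g := g1) (g' := g2) hd1 (by simp [hg1, ha, hb]; ring) (K := K) 1
      (by intro t ht; simpa using h2 t ht)
    intro t ht
    have := this t ht
    linarith [this]
  have h0 : ∀ t ∈ Set.Icc (0:ℝ) 1, |g0 t| ≤ (K / 2) * t ^ 3 / 3 := by
    intro t ht
    have h := poly_bound (g := g0) (g' := g1) hd0 (by simp [hg0, ha, hb]) (K := K / 2) 2 h1 t ht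
    norm_num at h
    exact h
  have hfin := h0 1 (by norm_num)
  have hval : g0 1 = L (θ + v) - L (θ - v) - 2 * (fderiv ℝ L θ v) := by
    have e1 : a 0 1 = L (θ + v) := by simp [ha, iteratedFDeriv_zero_apply]
    have e2 : b 0 1 = L (θ - v) := by simp [hb, iteratedFDeriv_zero_apply]
    have e3 : a 1 0 = fderiv ℝ L θ v := by simp [ha, iteratedFDeriv_one_apply]
    simp [hg0, e1, e2, e3]
  rw [hval] at hfin
  calc |L (θ + v) - L (θ - v) - 2 * (fderiv ℝ L θ v)| ≤ (K / 2) * 1 ^ 3 / 3 := hfin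
    _ = D₁ * ‖v‖ ^ 3 / 3 := by rw [hK]; ring

variable {d : ℕ}

lemma eunorm_le_sum (x : EuclideanSpace ℝ (Fin d)) : ‖x‖ ≤ ∑ i, |x i| := by
  have hx : x = ∑ i, (EuclideanSpace.single i (x i)) := by
    ext j
    rw [WithLp.ofLp_sum, Fintype.sum_apply]
    simp [EuclideanSpace.single_apply]
  calc ‖x‖ = ‖∑ i, (EuclideanSpace.single i (x i))‖ := by rw [← hx]
    _ ≤ ∑ i, ‖EuclideanSpace.single i (x i)‖ := norm_sum_le _ _
    _ = ∑ i, |x i| := by simp [EuclideanSpace.norm_single]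

lemma integrable_of_coords {Ω : Type*} {m0 : MeasurableSpace Ω} {μ : Measure Ω}
    {f : Ω → EuclideanSpace ℝ (Fin d)} (hf : AEStronglyMeasurable f μ)
    (h : ∀ i, Integrable (fun ω => f ω i) μ) : Integrable f μ := by
  refine Integrable.mono' (g := fun ω => ∑ i, |f ω i|)
    (integrable_finset_sum _ fun i _ => (h i).abs) hf ?_
  exact ae_of_all _ fun ω => eunorm_le_sum (f ω)

end Helpers


/-- bias part of Lemma 1: under the standing assumptions, the two-query
gradient estimator `ghat(θ,c)` satisfies the bias bound
`‖E[ghat(θ,c)] − ∇L(θ)‖ ≤ c² D₁ D₂ / 6` for every `θ` and every `c > 0`, provided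
`E[‖Δ‖³ ‖φ(Δ)‖] ≤ D₂`. -/
theorem bias_bound_of_two_query_gradient_estimator
    (d : ℕ) (hd : 1 ≤ d)
    (L : EuclideanSpace ℝ (Fin d) → ℝ)
    (D₁ D₂ : ℝ) (hD₁ : 0 ≤ D₁) (hD₂ : 0 ≤ D₂)
    (hL : ContDiff ℝ 3 L)
    (hLbd : ∀ x, ‖iteratedFDeriv ℝ 3 L x‖ ≤ D₁)
    {Ω : Type*} {m0 : MeasurableSpace Ω} (μ : Measure Ω) [IsProbabilityMeasure μ]
    (Δ : Ω → EuclideanSpace ℝ (Fin d)) (hΔ : Measurable Δ)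
    (φ : EuclideanSpace ℝ (Fin d) → EuclideanSpace ℝ (Fin d)) (hφ : Measurable φ)
    -- `E[φ(Δ) Δᵀ] = I`
    (hid_int : ∀ i j : Fin d, Integrable (fun ω => φ (Δ ω) i * Δ ω j) μ)
    (hid : ∀ i j : Fin d, ∫ ω, φ (Δ ω) i * Δ ω j ∂μ = if i = j then (1 : ℝ) else 0)
    -- integrable noises with `E[ε⁺ − ε⁻ | Δ] = 0` a.s.
    (εp εm : Ω → ℝ) (hεp : Integrable εp μ) (hεm : Integrable εm μ)
    (hnoise : μ[fun ω => εp ω - εm ω|MeasurableSpace.comap Δ inferInstance] =ᵐ[μ] 0)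
    -- the two-query gradient estimator
    (ghat : EuclideanSpace ℝ (Fin d) → ℝ → Ω → EuclideanSpace ℝ (Fin d))
    (hghat : ∀ θ c ω, ghat θ c ω
      = ((L (θ + c • Δ ω) + εp ω - L (θ - c • Δ ω) - εm ω) / (2 * c)) • φ (Δ ω))
    -- moment bound `E[‖Δ‖³ ‖φ(Δ)‖] ≤ D₂`
    (hmom_int : Integrable (fun ω => ‖Δ ω‖ ^ 3 * ‖φ (Δ ω)‖) μ)
    (hmom : ∫ ω, ‖Δ ω‖ ^ 3 * ‖φ (Δ ω)‖ ∂μ ≤ D₂)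
    (θ : EuclideanSpace ℝ (Fin d)) (c : ℝ) (hc : 0 < c)
    (hint : Integrable (ghat θ c) μ) :
    ‖(∫ ω, ghat θ c ω ∂μ) - gradient L θ‖ ≤ c ^ 2 * D₁ * D₂ / 6 := by
  have hc' : (2 : ℝ) * c ≠ 0 := by positivity
  set g : EuclideanSpace ℝ (Fin d) := gradient L θ with hg
  have hgrad : ∀ w : EuclideanSpace ℝ (Fin d), fderiv ℝ L θ w = ∑ j, g j * w j := by
    intro w
    have h1 : ⟪g, w⟫ = fderiv ℝ L θ w := by simp [hg, gradient]
    rw [← h1, PiLp.inner_apply]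
    simp [RCLike.inner_apply]
    exact Finset.sum_congr rfl fun _ _ => mul_comm _ _
  -- definitions
  set A : Ω → EuclideanSpace ℝ (Fin d) :=
    fun ω => (∑ j, g j * Δ ω j) • φ (Δ ω) with hA
  set r : Ω → ℝ :=
    fun ω => (L (θ + c • Δ ω) - L (θ - c • Δ ω)) / (2 * c) - ∑ j, g j * Δ ω j with hr
  set R : Ω → EuclideanSpace ℝ (Fin d) := fun ω => r ω • φ (Δ ω) with hR
  set N : Ω → EuclideanSpace ℝ (Fin d) :=
    fun ω => ((εp ω - εm ω) / (2 * c)) • φ (Δ ω) with hN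
  have hsplit : ∀ ω, ghat θ c ω = A ω + R ω + N ω := by
    intro ω
    rw [hghat, hA, hR, hN]
    rw [← add_smul, ← add_smul]
    congr 1
    simp only [hr]
    ring
  -- measurability
  have mΔi : ∀ i, Measurable (fun ω => Δ ω i) := fun i =>
    ((EuclideanSpace.proj i).continuous.measurable).comp hΔ
  have mφi : ∀ i, Measurable (fun ω => φ (Δ ω) i) := fun i =>
    ((EuclideanSpace.proj i).continuous.measurable).comp (hφ.comp hΔ)
  have mφΔ : Measurable (fun ω => φ (Δ ω)) := hφ.comp hΔ
  have mr : Measurable r := by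
    apply Measurable.sub
    · apply Measurable.div_const
      exact ((hL.continuous.measurable.comp ((measurable_const.add (hΔ.const_smul c)))).sub
        (hL.continuous.measurable.comp ((measurable_const.sub (hΔ.const_smul c)))))
    · exact Finset.measurable_sum _ fun j _ => (mΔi j).const_mul (g j)
  have mA : AEStronglyMeasurable A μ :=
    ((Finset.measurable_sum Finset.univ fun j _ =>
      (mΔi j).const_mul (g j)).smul mφΔ).aestronglyMeasurable
  have mR : AEStronglyMeasurable R μ := (mr.smul mφΔ).aestronglyMeasurable
  -- Taylor bound on r
  have hrb : ∀ ω, |r ω| ≤ (c ^ 2 * D₁ / 6) * ‖Δ ω‖ ^ 3 := by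
    intro ω
    have ht := taylor_sym hL hLbd θ (c • Δ ω)
    have hfd : fderiv ℝ L θ (c • Δ ω) = c * ∑ j, g j * Δ ω j := by
      rw [hgrad]
      rw [Finset.mul_sum]
      congr 1
      funext j
      have : (c • Δ ω) j = c * Δ ω j := rfl
      rw [this]; ring
    rw [hfd, norm_smul] at ht
    have hre : r ω = (L (θ + c • Δ ω) - L (θ - c • Δ ω) - 2 * (c * ∑ j, g j * Δ ω j)) / (2 * c) := by
      rw [hr, sub_div]
      congr 1
      field_simp
    rw [hre, abs_div, abs_of_pos (by positivity : (0:ℝ) < 2 * c)]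
    rw [div_le_iff₀ (by positivity : (0:ℝ) < 2 * c)]
    calc |L (θ + c • Δ ω) - L (θ - c • Δ ω) - 2 * (c * ∑ j, g j * Δ ω j)|
        ≤ D₁ * (‖c‖ * ‖Δ ω‖) ^ 3 / 3 := ht
      _ = c ^ 2 * D₁ / 6 * ‖Δ ω‖ ^ 3 * (2 * c) := by
          rw [Real.norm_eq_abs, abs_of_pos hc]; ring
  -- integrability of pieces
  have intT : ∀ j, Integrable (fun ω => Δ ω j • φ (Δ ω)) μ := by
    intro j
    apply integrable_of_coords (((mΔi j).smul mφΔ).aestronglyMeasurable)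
    intro i
    have : (fun ω => (Δ ω j • φ (Δ ω)) i) = fun ω => φ (Δ ω) i * Δ ω j := by
      funext ω
      have : (Δ ω j • φ (Δ ω)) i = Δ ω j * φ (Δ ω) i := rfl
      rw [this]; ring
    show Integrable (fun ω => (Δ ω j • φ (Δ ω)) i) μ
    rw [this]
    exact hid_int i j
  have intA : Integrable A μ := by
    have : A = fun ω => ∑ j, g j • (Δ ω j • φ (Δ ω)) := by
      funext ω
      show (∑ j, g j * Δ ω j) • φ (Δ ω) = _
      rw [Finset.sum_smul]
      congr 1
      funext j
      rw [mul_smul]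
    rw [this]
    exact integrable_finset_sum _ fun j _ => (intT j).smul (g j)
  have intR : Integrable R μ := by
    refine Integrable.mono' (g := fun ω => (c ^ 2 * D₁ / 6) * (‖Δ ω‖ ^ 3 * ‖φ (Δ ω)‖))
      (hmom_int.const_mul _) mR (ae_of_all _ fun ω => ?_)
    rw [hR]
    calc ‖r ω • φ (Δ ω)‖ = |r ω| * ‖φ (Δ ω)‖ := by rw [norm_smul, Real.norm_eq_abs]
      _ ≤ ((c ^ 2 * D₁ / 6) * ‖Δ ω‖ ^ 3) * ‖φ (Δ ω)‖ := by
          gcongr; exact hrb ω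
      _ = (c ^ 2 * D₁ / 6) * (‖Δ ω‖ ^ 3 * ‖φ (Δ ω)‖) := by ring
  have hint' : Integrable (fun ω => A ω + R ω + N ω) μ :=
    hint.congr (ae_of_all _ fun ω => hsplit ω)
  have intN : Integrable N μ := by
    have h := (hint'.sub intA).sub intR
    refine h.congr (ae_of_all _ fun ω => ?_)
    simp only [Pi.sub_apply]
    abel
  -- integral of A is g
  have hA_int : (∫ ω, A ω ∂μ) = g := by
    refine PiLp.ext fun i => ?_
    have hproj : (∫ ω, A ω ∂μ) i = ∫ ω, A ω i ∂μ :=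
      ((EuclideanSpace.proj i).integral_comp_comm intA).symm
    rw [hproj]
    have he : (fun ω => A ω i) = fun ω => ∑ j, g j * (φ (Δ ω) i * Δ ω j) := by
      funext ω
      have h1 : A ω i = (∑ j, g j * Δ ω j) * φ (Δ ω) i := rfl
      rw [h1, Finset.sum_mul]
      congr 1
      funext j
      ring
    rw [he, integral_finset_sum _ (fun j _ => (hid_int i j).const_mul (g j))]
    have : ∀ j, ∫ ω, g j * (φ (Δ ω) i * Δ ω j) ∂μ = g j * (if i = j then (1:ℝ) else 0) := by
      intro j
      rw [integral_const_mul, hid i j]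
    simp only [this, mul_ite, mul_one, mul_zero]
    simp
  -- integral of N is 0
  have hm : MeasurableSpace.comap Δ inferInstance ≤ m0 := hΔ.comap_le
  set f : Ω → ℝ := fun ω => εp ω - εm ω with hf
  have hN_int : (∫ ω, N ω ∂μ) = 0 := by
    refine PiLp.ext fun i => ?_
    have hproj : (∫ ω, N ω ∂μ) i = ∫ ω, N ω i ∂μ :=
      ((EuclideanSpace.proj i).integral_comp_comm intN).symm
    rw [hproj]
    set q : Ω → ℝ := fun ω => φ (Δ ω) i with hq
    have hΔm : @Measurable Ω (EuclideanSpace ℝ (Fin d)) (MeasurableSpace.comap Δ inferInstance) _ Δ :=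
      Measurable.of_comap_le le_rfl
    have hφΔm : @Measurable Ω (EuclideanSpace ℝ (Fin d)) (MeasurableSpace.comap Δ inferInstance) _ (fun ω => φ (Δ ω)) :=
      Measurable.comp hφ hΔm
    have hq_meas : @Measurable Ω ℝ (MeasurableSpace.comap Δ inferInstance) _ q :=
      Measurable.comp ((EuclideanSpace.proj i).continuous.measurable) hφΔm
    have hq_sm : StronglyMeasurable[(MeasurableSpace.comap Δ inferInstance)] q := hq_meas.stronglyMeasurable
    have hNi_int : Integrable (fun ω => N ω i) μ := by
      have h := ContinuousLinearMap.integrable_comp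
        (EuclideanSpace.proj i : EuclideanSpace ℝ (Fin d) →L[ℝ] ℝ) intN
      exact h
    have hqf_int : Integrable (q * f) μ := by
      refine (hNi_int.const_mul (2 * c)).congr (ae_of_all _ fun ω => ?_)
      have h1 : N ω i = ((εp ω - εm ω) / (2 * c)) * φ (Δ ω) i := rfl
      show (2 * c) * N ω i = q ω * f ω
      rw [h1, hq, hf]
      field_simp
    have hcond := condExp_mul_of_stronglyMeasurable_left (μ := μ) hq_sm hqf_int (hεp.sub hεm)
    have hzero : μ[q * f|(MeasurableSpace.comap Δ inferInstance)] =ᵐ[μ] 0 := by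
      refine hcond.trans ?_
      filter_upwards [hnoise] with ω hω
      have : (μ[f|(MeasurableSpace.comap Δ inferInstance)]) ω = 0 := hω
      simp [Pi.mul_apply, this]
    have hint_qf : ∫ ω, q ω * f ω ∂μ = 0 := by
      have h1 : ∫ ω, (q * f) ω ∂μ = 0 := by
        rw [← integral_condExp hm (f := q * f), integral_congr_ae hzero]
        simp
      simpa using h1
    have he : (fun ω => N ω i) = fun ω => (1 / (2 * c)) * (q ω * f ω) := by
      funext ω
      have h1 : N ω i = ((εp ω - εm ω) / (2 * c)) * φ (Δ ω) i := rfl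
      rw [h1, hq, hf]
      field_simp
    rw [he, integral_const_mul, hint_qf, mul_zero]
    simp
  -- conclusion
  have hAR : Integrable (fun ω => A ω + R ω) μ := intA.add intR
  have hsum : (∫ ω, ghat θ c ω ∂μ) = g + ∫ ω, R ω ∂μ := by
    have h1 : (∫ ω, ghat θ c ω ∂μ) = ∫ ω, (A ω + R ω) + N ω ∂μ :=
      integral_congr_ae (ae_of_all _ hsplit)
    rw [h1, integral_add hAR intN, integral_add intA intR, hA_int, hN_int, add_zero]
  rw [hsum, add_sub_cancel_left]
  calc ‖∫ ω, R ω ∂μ‖ ≤ ∫ ω, ‖R ω‖ ∂μ := norm_integral_le_integral_norm _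
    _ ≤ ∫ ω, (c ^ 2 * D₁ / 6) * (‖Δ ω‖ ^ 3 * ‖φ (Δ ω)‖) ∂μ := by
        refine integral_mono intR.norm (hmom_int.const_mul _) fun ω => ?_
        calc ‖R ω‖ = |r ω| * ‖φ (Δ ω)‖ := by rw [hR, norm_smul, Real.norm_eq_abs]
          _ ≤ ((c ^ 2 * D₁ / 6) * ‖Δ ω‖ ^ 3) * ‖φ (Δ ω)‖ := by gcongr; exact hrb ω
          _ = (c ^ 2 * D₁ / 6) * (‖Δ ω‖ ^ 3 * ‖φ (Δ ω)‖) := by ring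
    _ = (c ^ 2 * D₁ / 6) * ∫ ω, ‖Δ ω‖ ^ 3 * ‖φ (Δ ω)‖ ∂μ := integral_const_mul _ _
    _ ≤ (c ^ 2 * D₁ / 6) * D₂ := by gcongr
    _ = c ^ 2 * D₁ * D₂ / 6 := by ring
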